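/- Let X be a set and let 𝒜 be a finite family of subsets of X that has independence dimension ≤ 1 with respect to X. Then there exists a linear order < on X such that for every A ∈ 𝒜, either A is a <-convex subset of X or X \ A is a <-convex subset of X. -/

import Mathlib

/-- `S` is convex with respect to the strict order `r`. -/
def IsRConvex {X : Type*} (r : X → X → Prop) (S : Set X) : Prop :=
  ∀ a b c : X, r a b → r b c → a ∈ S → c ∈ S → b ∈ S

open Classical in
lemma laminar_lemma {X : Type*} (s : Finset (Set X))
    (hlam : ∀ A ∈ s, ∀ B ∈ s, A ∩ B = ∅ ∨ A ⊆ B ∨ B ⊆ A) :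
    ∃ r : X → X → Prop, IsStrictTotalOrder X r ∧ ∀ A ∈ s, IsRConvex r A := by
  induction s using Finset.strongInduction with
  | _ s ih =>
    rcases s.eq_empty_or_nonempty with rfl | hne
    · exact ⟨WellOrderingRel, inferInstance, by simp⟩
    obtain ⟨M, hM, hmax⟩ : ∃ M ∈ s, ∀ x ∈ s, ¬ M < x := by
      obtain ⟨M, hMm⟩ := Finset.exists_maximal hne
      exact ⟨M, hMm.1, fun x hx hlt => lt_irrefl _ (lt_of_lt_of_le hlt (hMm.2 hx hlt.le))⟩
    by_cases hM0 : M = ∅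
    · refine ⟨WellOrderingRel, inferInstance, ?_⟩
      intro A hA
      have hA0 : A = ∅ := by
        by_contra hA0
        exact hmax A hA (by rw [hM0]; exact (Set.empty_ssubset).mpr (Set.nonempty_iff_ne_empty.mpr hA0))
      intro a b c _ _ ha _
      simp [hA0] at ha
    · set s₁ := s.filter (fun A => A ⊆ M ∧ A ≠ M) with hs₁
      set s₂ := s.filter (fun A => A ∩ M = ∅) with hs₂
      have hsub1 : s₁ ⊂ s := Finset.filter_ssubset.mpr ⟨M, hM, by simp⟩
      have hsub2 : s₂ ⊂ s := Finset.filter_ssubset.mpr ⟨M, hM, by simp [hM0]⟩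
      obtain ⟨r₁, hsto1, hconv1⟩ := ih s₁ hsub1
        (fun A hA B hB => hlam A (Finset.mem_of_mem_filter _ hA) B (Finset.mem_of_mem_filter _ hB))
      obtain ⟨r₂, hsto2, hconv2⟩ := ih s₂ hsub2
        (fun A hA B hB => hlam A (Finset.mem_of_mem_filter _ hA) B (Finset.mem_of_mem_filter _ hB))
      set r : X → X → Prop := fun x y =>
        (x ∈ M ∧ y ∉ M) ∨ (x ∈ M ∧ y ∈ M ∧ r₁ x y) ∨ (x ∉ M ∧ y ∉ M ∧ r₂ x y) with hr
      have htri : ∀ a b : X, r a b ∨ a = b ∨ r b a := by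
        intro a b
        by_cases ha : a ∈ M <;> by_cases hb : b ∈ M
        · rcases (or_iff_not_imp_left.mpr fun h1 => or_iff_not_imp_right.mpr fun h2 => hsto1.trichotomous a b h1 h2 : r₁ a b ∨ a = b ∨ r₁ b a) with h1 | h1 | h1 <;> simp [hr, ha, hb, h1]
        · simp [hr, ha, hb]
        · simp [hr, ha, hb]
        · rcases (or_iff_not_imp_left.mpr fun h1 => or_iff_not_imp_right.mpr fun h2 => hsto2.trichotomous a b h1 h2 : r₂ a b ∨ a = b ∨ r₂ b a) with h1 | h1 | h1 <;> simp [hr, ha, hb, h1]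
      have hirr : ∀ a : X, ¬ r a a := by
        intro a h
        rcases h with ⟨h1, h2⟩ | ⟨_, _, h1⟩ | ⟨_, _, h1⟩
        · exact h2 h1
        · exact hsto1.irrefl a h1
        · exact hsto2.irrefl a h1
      have htrans : ∀ a b c : X, r a b → r b c → r a c := by
        intro a b c hab hbc
        rcases hab with ⟨h1, h2⟩ | ⟨h1, h2, h3⟩ | ⟨h1, h2, h3⟩ <;>
          rcases hbc with ⟨g1, g2⟩ | ⟨g1, g2, g3⟩ | ⟨g1, g2, g3⟩ <;>
          first
          | exact absurd g1 h2
          | exact absurd h2 g1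
          | exact Or.inl ⟨h1, g2⟩
          | exact Or.inr (Or.inl ⟨h1, g2, hsto1.trans _ _ _ h3 g3⟩)
          | exact Or.inr (Or.inr ⟨h1, g2, hsto2.trans _ _ _ h3 g3⟩)
      refine ⟨r, { trichotomous := fun a b h1 h2 => ((htri a b).resolve_left h1).resolve_right h2, irrefl := hirr, trans := htrans }, ?_⟩
      intro A hA
      by_cases hAM : A = M
      · subst hAM
        intro a b c hab hbc ha hc
        by_contra hb
        rcases hbc with ⟨g1, g2⟩ | ⟨g1, g2, g3⟩ | ⟨g1, g2, g3⟩
        · exact g2 hc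
        · exact hb g1
        · exact g2 hc
      · have hmem : A ∈ s₁ ∨ A ∈ s₂ := by
          rcases hlam A hA M hM with h1 | h1 | h1
          · exact Or.inr (Finset.mem_filter.mpr ⟨hA, h1⟩)
          · exact Or.inl (Finset.mem_filter.mpr ⟨hA, h1, hAM⟩)
          · exact absurd (h1.ssubset_of_ne (fun e => hAM e.symm)) (hmax A hA)
        rcases hmem with hA1 | hA1
        · obtain ⟨-, hAsub, -⟩ := Finset.mem_filter.mp hA1
          intro a b c hab hbc ha hc
          have haM : a ∈ M := hAsub ha
          have hcM : c ∈ M := hAsub hc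
          have hbM : b ∈ M := by
            by_contra hbM
            rcases hbc with ⟨g1, g2⟩ | ⟨g1, g2, g3⟩ | ⟨g1, g2, g3⟩
            · exact g2 hcM
            · exact hbM g1
            · exact g2 hcM
          have h1 : r₁ a b := by
            rcases hab with ⟨g1, g2⟩ | ⟨g1, g2, g3⟩ | ⟨g1, g2, g3⟩
            · exact absurd hbM g2
            · exact g3
            · exact absurd haM g1
          have h2 : r₁ b c := by
            rcases hbc with ⟨g1, g2⟩ | ⟨g1, g2, g3⟩ | ⟨g1, g2, g3⟩
            · exact absurd hcM g2
            · exact g3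
            · exact absurd hbM g1
          exact hconv1 A hA1 a b c h1 h2 ha hc
        · obtain ⟨-, hAdisj⟩ := Finset.mem_filter.mp hA1
          intro a b c hab hbc ha hc
          have haM : a ∉ M := fun hx => Set.eq_empty_iff_forall_notMem.mp hAdisj a ⟨ha, hx⟩
          have hcM : c ∉ M := fun hx => Set.eq_empty_iff_forall_notMem.mp hAdisj c ⟨hc, hx⟩
          have hbM : b ∉ M := by
            rcases hab with ⟨g1, g2⟩ | ⟨g1, g2, g3⟩ | ⟨g1, g2, g3⟩
            · exact g2
            · exact absurd g1 haM
            · exact g2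
          have h1 : r₂ a b := by
            rcases hab with ⟨g1, g2⟩ | ⟨g1, g2, g3⟩ | ⟨g1, g2, g3⟩
            · exact absurd g1 haM
            · exact absurd g1 haM
            · exact g3
          have h2 : r₂ b c := by
            rcases hbc with ⟨g1, g2⟩ | ⟨g1, g2, g3⟩ | ⟨g1, g2, g3⟩
            · exact absurd g1 hbM
            · exact absurd g1 hbM
            · exact g3
          exact hconv2 A hA1 a b c h1 h2 ha hc

/-- A family of subsets of `X` has independence dimension `≤ 1` with respect to `X`. -/
def IndepDimLEOne {X : Type*} (𝒜 : Set (Set X)) : Prop :=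
  ∀ A ∈ 𝒜, ∀ B ∈ 𝒜, A ∩ B = ∅ ∨ A \ B = ∅ ∨ B \ A = ∅ ∨ (A ∪ B)ᶜ = ∅

theorem stmt_1 {X : Type*} (𝒜 : Set (Set X)) (hfin : 𝒜.Finite) (h : IndepDimLEOne 𝒜) :
    ∃ r : X → X → Prop, IsStrictTotalOrder X r ∧
      ∀ A ∈ 𝒜, IsRConvex r A ∨ IsRConvex r Aᶜ := by
  classical
  by_cases hX : Nonempty X
  · obtain ⟨x₀⟩ := hX
    set f : Set X → Set X := fun A => if x₀ ∈ A then Aᶜ else A with hf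
    -- normalized family avoids x₀ and is crossing-free
    have hx₀ : ∀ A, x₀ ∉ f A := by
      intro A
      by_cases hA : x₀ ∈ A <;> simp [hf, hA]
    have swap : ∀ A B : Set X,
        (A ∩ B = ∅ ∨ A \ B = ∅ ∨ B \ A = ∅ ∨ (A ∪ B)ᶜ = ∅) →
        (B ∩ A = ∅ ∨ B \ A = ∅ ∨ A \ B = ∅ ∨ (B ∪ A)ᶜ = ∅) := by
      intro A B hAB
      rw [Set.inter_comm, Set.union_comm]
      tauto
    have cpl : ∀ A B : Set X,
        (A ∩ B = ∅ ∨ A \ B = ∅ ∨ B \ A = ∅ ∨ (A ∪ B)ᶜ = ∅) →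
        (Aᶜ ∩ B = ∅ ∨ Aᶜ \ B = ∅ ∨ B \ Aᶜ = ∅ ∨ (Aᶜ ∪ B)ᶜ = ∅) := by
      intro A B hAB
      rcases hAB with h1 | h1 | h1 | h1
      · refine Or.inr (Or.inr (Or.inl ?_))
        refine Eq.trans ?_ h1
        ext x
        simp only [Set.mem_diff, Set.mem_inter_iff, Set.mem_compl_iff, not_not]
        tauto
      · refine Or.inr (Or.inr (Or.inr ?_))
        refine Eq.trans ?_ h1
        ext x
        simp only [Set.mem_diff, Set.mem_compl_iff, Set.mem_union, not_or, not_not]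
      · refine Or.inl ?_
        refine Eq.trans ?_ h1
        ext x
        simp only [Set.mem_diff, Set.mem_inter_iff, Set.mem_compl_iff]
        tauto
      · refine Or.inr (Or.inl ?_)
        refine Eq.trans ?_ h1
        ext x
        simp only [Set.mem_diff, Set.mem_compl_iff, Set.mem_union, not_or]
        try tauto
    have hcross : ∀ A ∈ 𝒜, ∀ B ∈ 𝒜,
        f A ∩ f B = ∅ ∨ f A \ f B = ∅ ∨ f B \ f A = ∅ ∨ (f A ∪ f B)ᶜ = ∅ := by
      intro A hA B hB
      have h0 := h A hA B hB
      by_cases hxA : x₀ ∈ A <;> by_cases hxB : x₀ ∈ B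
      · simp only [hf, if_pos hxA, if_pos hxB]
        exact cpl A Bᶜ (swap Bᶜ A (cpl B A (swap A B h0)))
      · simp only [hf, if_pos hxA, if_neg hxB]
        exact cpl A B h0
      · simp only [hf, if_neg hxA, if_pos hxB]
        exact swap Bᶜ A (cpl B A (swap A B h0))
      · simp only [hf, if_neg hxA, if_neg hxB]
        exact h0
    have hlam : ∀ A' ∈ (hfin.image f).toFinset, ∀ B' ∈ (hfin.image f).toFinset,
        A' ∩ B' = ∅ ∨ A' ⊆ B' ∨ B' ⊆ A' := by
      intro A' hA' B' hB'
      simp only [Set.Finite.mem_toFinset, Set.mem_image] at hA' hB'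
      obtain ⟨A, hA, rfl⟩ := hA'
      obtain ⟨B, hB, rfl⟩ := hB'
      rcases hcross A hA B hB with h1 | h1 | h1 | h1
      · exact Or.inl h1
      · exact Or.inr (Or.inl (Set.diff_eq_empty.mp h1))
      · exact Or.inr (Or.inr (Set.diff_eq_empty.mp h1))
      · exfalso
        have h2 : x₀ ∈ f A ∪ f B := by
          by_contra hx
          exact Set.eq_empty_iff_forall_notMem.mp h1 x₀ hx
        rcases h2 with hx | hx
        · exact hx₀ A hx
        · exact hx₀ B hx
    obtain ⟨r, hsto, hconv⟩ := laminar_lemma (hfin.image f).toFinset hlam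
    refine ⟨r, hsto, ?_⟩
    intro A hA
    have hfA : IsRConvex r (f A) := by
      refine hconv (f A) ?_
      simp only [Set.Finite.mem_toFinset, Set.mem_image]
      exact ⟨A, hA, rfl⟩
    by_cases hxA : x₀ ∈ A
    · right; simpa [hf, hxA] using hfA
    · left; simpa [hf, hxA] using hfA
  · refine ⟨WellOrderingRel, inferInstance, ?_⟩
    intro A hA
    left
    intro a
    exact absurd ⟨a⟩ hX
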